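/- Let S(q₁,…,q_s) be the multiplicative semigroup generated by pairwise coprime integers q₁,…,q_s ≥ 2. Then |S(q₁,…,q_s) ∩ [1,n]| = K_s (log n)^s + O((log n)^{s−1}) as n → ∞, where K_s = (1/s!)·∏_{j=1}^s (1/log q_j). -/

import Mathlib

lemma pow_sub_pow_upper {a b : ℝ} (hb : 0 ≤ b) (hba : b ≤ a) (s : ℕ) :
    a ^ (s+1) - b ^ (s+1) ≤ (s+1) * (a - b) * a ^ s := by
  induction s with
  | zero => simp
  | succ s ih =>
    have ha : 0 ≤ a := hb.trans hba
    have hbs : b ^ (s+1) ≤ a ^ (s+1) := pow_le_pow_left₀ hb hba _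
    have h1 : a ^ (s+2) - b ^ (s+2) = a * (a ^ (s+1) - b ^ (s+1)) + b ^ (s+1) * (a - b) := by
      ring
    rw [h1]
    have h2 : a * (a ^ (s+1) - b ^ (s+1)) ≤ a * ((s+1) * (a - b) * a ^ s) :=
      mul_le_mul_of_nonneg_left ih ha
    have h3 : b ^ (s+1) * (a - b) ≤ a ^ (s+1) * (a - b) :=
      mul_le_mul_of_nonneg_right hbs (by linarith)
    have : a * ((s+1) * (a - b) * a ^ s) = ((s:ℝ)+1) * (a-b) * a^(s+1) := by ring
    push_cast
    nlinarith [pow_nonneg ha (s+1)]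

lemma pow_sub_pow_lower {a b : ℝ} (hb : 0 ≤ b) (hba : b ≤ a) (s : ℕ) :
    (s+1) * (a - b) * b ^ s ≤ a ^ (s+1) - b ^ (s+1) := by
  induction s with
  | zero => simp
  | succ s ih =>
    have ha : 0 ≤ a := hb.trans hba
    have h1 : a ^ (s+2) - b ^ (s+2) = a * (a ^ (s+1) - b ^ (s+1)) + b ^ (s+1) * (a - b) := by
      ring
    rw [h1]
    have h2 : a * ((s+1) * (a - b) * b ^ s) ≤ a * (a ^ (s+1) - b ^ (s+1)) :=
      mul_le_mul_of_nonneg_left ih ha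
    have hbp := pow_nonneg hb s
    have hbp1 := pow_nonneg hb (s+1)
    have h3 : b * (((s:ℝ)+1) * (a - b) * b ^ s) ≤ a * (((s:ℝ)+1) * (a - b) * b ^ s) :=
      mul_le_mul_of_nonneg_right hba (mul_nonneg (mul_nonneg (by positivity) (sub_nonneg.2 hba)) hbp)
    have h4 : b * (((s:ℝ)+1) * (a - b) * b ^ s) = ((s:ℝ)+1) * (a-b) * b^(s+1) := by ring
    push_cast
    nlinarith [hbp1]


lemma sum_pow_lower {x c : ℝ} (hx : 0 ≤ x) (hc : 0 < c) (s : ℕ) :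
    x ^ (s+1) ≤ (s+1) * c * ∑ k ∈ Finset.range (⌊x / c⌋₊ + 1), (x - k * c) ^ s := by
  set K := ⌊x / c⌋₊ with hK
  set F : ℕ → ℝ := fun k => (max (x - k * c) 0) ^ (s+1) with hF
  have key : ∀ k ∈ Finset.range (K + 1), F k - F (k+1) ≤ (s+1) * c * (x - k * c) ^ s := by
    intro k hk
    rw [Finset.mem_range] at hk
    have hkK : k ≤ K := Nat.lt_succ_iff.mp hk
    have hkc : (k : ℝ) * c ≤ x := by
      have : (k : ℝ) ≤ x / c := le_trans (Nat.cast_le.2 hkK) (Nat.floor_le (by positivity))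
      calc (k:ℝ) * c ≤ (x / c) * c := by nlinarith
        _ = x := by field_simp
    have hA : max (x - k * c) 0 = x - k * c := max_eq_left (by linarith)
    have hB0 : (0:ℝ) ≤ max (x - (k+1 : ℕ) * c) 0 := le_max_right _ _
    have hBA : max (x - (k+1 : ℕ) * c) 0 ≤ max (x - k * c) 0 := by
      apply max_le_max_right
      push_cast; nlinarith
    have hdiff : max (x - k * c) 0 - max (x - (k+1 : ℕ) * c) 0 ≤ c := by
      rw [hA]
      rcases le_max_iff.mpr (Or.inr (le_refl (0:ℝ))) with _
      have h1 : x - (k+1 : ℕ) * c ≤ max (x - (k+1:ℕ) * c) 0 := le_max_left _ _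
      push_cast at h1 ⊢; nlinarith [le_max_right (x - ((k:ℝ)+1) * c) (0:ℝ)]
    calc F k - F (k+1) ≤ (s+1) * (max (x - k*c) 0 - max (x - (k+1:ℕ)*c) 0) * (max (x - k*c) 0) ^ s :=
          pow_sub_pow_upper hB0 hBA s
      _ ≤ (s+1) * c * (x - k * c) ^ s := by
          rw [hA]
          apply mul_le_mul_of_nonneg_right _ (pow_nonneg (by linarith) s)
          apply mul_le_mul_of_nonneg_left _ (by positivity)
          rw [hA] at hdiff; exact hdiff
  have tele : ∑ k ∈ Finset.range (K + 1), (F k - F (k+1)) = F 0 - F (K+1) := by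
    rw [← Finset.sum_range_sub' F (K+1)]
  have hF0 : F 0 = x ^ (s+1) := by simp [hF, max_eq_left hx]
  have hFK : F (K+1) = 0 := by
    have : x < (K + 1 : ℕ) * c := by
      have h1 : x / c < K + 1 := Nat.lt_floor_add_one _
      push_cast
      calc x = (x / c) * c := by field_simp
        _ < ((K:ℝ) + 1) * c := by nlinarith
    simp only [hF]
    rw [max_eq_right (by linarith)]
    simp
  have := Finset.sum_le_sum key
  rw [tele, hF0, hFK] at this
  rw [Finset.mul_sum]
  linarith

lemma sum_pow_upper {x c D : ℝ} (hx : 0 ≤ x) (hc : 0 < c) (hD : 0 ≤ D) (s : ℕ) :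
    (s+1) * c * ∑ k ∈ Finset.range (⌊x / c⌋₊ + 1), (x + D - k * c) ^ s
      ≤ (x + D + c) ^ (s+1) := by
  set K := ⌊x / c⌋₊ with hK
  set G : ℕ → ℝ := fun k => (x + D + c - k * c) ^ (s+1) with hG
  have key : ∀ k ∈ Finset.range (K + 1), (s+1) * c * (x + D - k * c) ^ s ≤ G k - G (k+1) := by
    intro k hk
    rw [Finset.mem_range] at hk
    have hkK : k ≤ K := Nat.lt_succ_iff.mp hk
    have hkc : (k : ℝ) * c ≤ x := by
      have : (k : ℝ) ≤ x / c := le_trans (Nat.cast_le.2 hkK) (Nat.floor_le (by positivity))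
      calc (k:ℝ) * c ≤ (x / c) * c := by nlinarith
        _ = x := by field_simp
    have hz : 0 ≤ x + D - k * c := by linarith
    have h1 : G (k+1) = (x + D - k * c) ^ (s+1) := by
      simp only [hG]; push_cast; ring_nf
    have h2 : G k = ((x + D - k * c) + c) ^ (s+1) := by
      simp only [hG]; ring_nf
    rw [h1, h2]
    have := pow_sub_pow_lower (a := (x + D - k*c) + c) (b := x + D - k*c) hz (by linarith) s
    calc ((s:ℝ)+1) * c * (x + D - k*c)^s
        = ((s:ℝ)+1) * (((x + D - k*c) + c) - (x + D - k*c)) * (x + D - k*c)^s := by ring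
      _ ≤ _ := this
  have tele : ∑ k ∈ Finset.range (K + 1), (G k - G (k+1)) = G 0 - G (K+1) := by
    rw [← Finset.sum_range_sub' G (K+1)]
  have hKc : (K : ℝ) * c ≤ x := by
    have : (K : ℝ) ≤ x / c := Nat.floor_le (by positivity)
    calc (K:ℝ) * c ≤ (x / c) * c := by nlinarith
      _ = x := by field_simp
  have hGK : 0 ≤ G (K+1) := by
    have : G (K+1) = (x + D - K * c) ^ (s+1) := by simp only [hG]; push_cast; ring_nf
    rw [this]; exact pow_nonneg (by linarith) _
  have hG0 : G 0 = (x + D + c) ^ (s+1) := by simp [hG]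
  have := Finset.sum_le_sum key
  rw [tele, hG0] at this
  rw [Finset.mul_sum]
  linarith


lemma simplex_finite (s : ℕ) (c : Fin s → ℝ) (hc : ∀ j, 0 < c j) (x : ℝ) :
    {a : Fin s → ℕ | ∑ j, (a j : ℝ) * c j ≤ x}.Finite := by
  apply Set.Finite.subset (Set.Finite.pi (fun j : Fin s => Set.finite_Iic ⌊x / c j⌋₊))
  intro a ha
  simp only [Set.mem_pi, Set.mem_univ, Set.mem_Iic, forall_true_left]
  intro j
  have h1 : (a j : ℝ) * c j ≤ x := by
    refine le_trans ?_ ha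
    exact Finset.single_le_sum (f := fun i => (a i : ℝ) * c i)
      (fun i _ => mul_nonneg (Nat.cast_nonneg _) (hc i).le) (Finset.mem_univ j)
  exact Nat.le_floor (by rw [le_div_iff₀ (hc j)]; exact h1)

lemma simplex_sandwich : ∀ (s : ℕ) (c : Fin s → ℝ), (∀ j, 0 < c j) → ∀ (x : ℝ), 0 ≤ x →
    x ^ s ≤ ((s.factorial : ℝ) * ∏ j, c j) *
        ({a : Fin s → ℕ | ∑ j, (a j : ℝ) * c j ≤ x}.ncard : ℝ) ∧
    ((s.factorial : ℝ) * ∏ j, c j) *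
        ({a : Fin s → ℕ | ∑ j, (a j : ℝ) * c j ≤ x}.ncard : ℝ) ≤ (x + ∑ j, c j) ^ s := by
  intro s
  induction s with
  | zero =>
    intro c hc x hx
    have hset : {a : Fin 0 → ℕ | ∑ j, (a j : ℝ) * c j ≤ x} = Set.univ := by
      ext a; simp [hx]
    rw [hset, Set.ncard_univ]
    simp [Nat.card_unique]
  | succ s ih =>
    intro c hc x hx
    set c' : Fin s → ℝ := fun j => c j.castSucc with hc'
    set cl : ℝ := c (Fin.last s) with hcl
    have hcl0 : 0 < cl := hc _
    have hc'0 : ∀ j, 0 < c' j := fun j => hc _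
    set K := ⌊x / cl⌋₊ with hK
    set N : ℝ → Set (Fin s → ℕ) := fun y => {b : Fin s → ℕ | ∑ j, (b j : ℝ) * c' j ≤ y}
      with hN
    have hfin : ∀ y, (N y).Finite := fun y => simplex_finite s c' hc'0 y
    have hfin1 := simplex_finite (s+1) c hc x
    -- split sum over Fin (s+1)
    have hsplit : ∀ a : Fin (s+1) → ℕ,
        ∑ j, (a j : ℝ) * c j = (∑ j, ((Fin.init a) j : ℝ) * c' j) + (a (Fin.last s) : ℝ) * cl := by
      intro a
      rw [Fin.sum_univ_castSucc]
      rfl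
    -- cardinality recursion
    have hmaps : ∀ a ∈ hfin1.toFinset, a (Fin.last s) ∈ Finset.range (K+1) := by
      intro a ha
      rw [Set.Finite.mem_toFinset] at ha
      rw [Finset.mem_range, Nat.lt_succ_iff, hK]
      apply Nat.le_floor
      rw [le_div_iff₀ hcl0]
      refine le_trans ?_ ha
      exact Finset.single_le_sum (f := fun i => (a i : ℝ) * c i)
        (fun i _ => mul_nonneg (Nat.cast_nonneg _) (hc i).le) (Finset.mem_univ _)
    have hcard : (hfin1.toFinset.card : ℕ) =
        ∑ k ∈ Finset.range (K+1), ((hfin (x - k * cl)).toFinset.card) := by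
      rw [Finset.card_eq_sum_card_fiberwise hmaps]
      refine Finset.sum_congr rfl (fun k hk => ?_)
      rw [Finset.mem_range, Nat.lt_succ_iff] at hk
      apply Finset.card_bij (fun a _ => Fin.init a)
      · intro a ha
        simp only [Finset.mem_filter, Set.Finite.mem_toFinset] at ha ⊢
        obtain ⟨ha1, ha2⟩ := ha
        rw [Set.mem_setOf_eq] at ha1
        rw [hsplit a, ha2] at ha1
        simp only [hN, Set.mem_setOf_eq]
        linarith
      · intro a ha b hb hab
        simp only [Finset.mem_filter] at ha hb
        have := Fin.snoc_init_self a
        rw [← Fin.snoc_init_self a, ← Fin.snoc_init_self b, hab, ha.2, hb.2]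
      · intro b hb
        refine ⟨Fin.snoc b k, ?_, ?_⟩
        · simp only [Finset.mem_filter, Set.Finite.mem_toFinset, Set.mem_setOf_eq,
            Fin.snoc_last, and_true]
          rw [hsplit (Fin.snoc b k)]
          simp only [Fin.init_snoc, Fin.snoc_last]
          rw [Set.Finite.mem_toFinset] at hb
          simp only [hN, Set.mem_setOf_eq] at hb
          linarith
        · simp
    -- translate ncards
    have hNc : ∀ y, ((N y).ncard : ℝ) = ((hfin y).toFinset.card : ℝ) := by
      intro y; rw [Set.ncard_eq_toFinset_card _ (hfin y)]
    have hNc1 : ({a : Fin (s+1) → ℕ | ∑ j, (a j : ℝ) * c j ≤ x}.ncard : ℝ)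
        = ∑ k ∈ Finset.range (K+1), (((hfin (x - k * cl)).toFinset.card : ℕ) : ℝ) := by
      rw [Set.ncard_eq_toFinset_card _ hfin1, hcard]
      push_cast
      rfl
    set D : ℝ := ∑ j, c' j with hD
    have hD0 : 0 ≤ D := Finset.sum_nonneg (fun j _ => (hc'0 j).le)
    have hprod : (∏ j, c j) = (∏ j, c' j) * cl := Fin.prod_univ_castSucc c
    have hsum : (∑ j, c j) = D + cl := Fin.sum_univ_castSucc c
    have hfact : ((s+1).factorial : ℝ) = (s+1) * (s.factorial : ℝ) := by
      rw [Nat.factorial_succ]; push_cast; ring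
    have hP'0 : 0 < ∏ j, c' j := Finset.prod_pos (fun j _ => hc'0 j)
    have hkge : ∀ k ∈ Finset.range (K+1), 0 ≤ x - k * cl := by
      intro k hk
      rw [Finset.mem_range, Nat.lt_succ_iff] at hk
      have h1 : (k : ℝ) ≤ x / cl := le_trans (Nat.cast_le.2 hk) (Nat.floor_le (by positivity))
      have := (le_div_iff₀ hcl0).mp h1
      linarith
    constructor
    · -- lower bound
      have h1 := sum_pow_lower hx hcl0 s
      have h2 : ∑ k ∈ Finset.range (K+1), (x - k * cl) ^ s ≤
          ∑ k ∈ Finset.range (K+1),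
            ((s.factorial : ℝ) * ∏ j, c' j) * (((hfin (x - k * cl)).toFinset.card : ℕ) : ℝ) := by
        refine Finset.sum_le_sum (fun k hk => ?_)
        have := (ih c' hc'0 (x - k * cl) (hkge k hk)).1
        rw [hNc] at this
        exact this
      rw [← Finset.mul_sum] at h2
      rw [hNc1, hfact, hprod]
      calc x ^ (s+1) ≤ (s+1) * cl * ∑ k ∈ Finset.range (K+1), (x - k * cl) ^ s := h1
        _ ≤ (s+1) * cl * (((s.factorial : ℝ) * ∏ j, c' j) *
              ∑ k ∈ Finset.range (K+1), (((hfin (x - k * cl)).toFinset.card : ℕ) : ℝ)) := by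
            apply mul_le_mul_of_nonneg_left h2 (by positivity)
        _ = (s+1) * (s.factorial : ℝ) * ((∏ j, c' j) * cl) *
              ∑ k ∈ Finset.range (K+1), (((hfin (x - k * cl)).toFinset.card : ℕ) : ℝ) := by
            ring
    · -- upper bound
      have h2 : ∑ k ∈ Finset.range (K+1),
            ((s.factorial : ℝ) * ∏ j, c' j) * (((hfin (x - k * cl)).toFinset.card : ℕ) : ℝ)
          ≤ ∑ k ∈ Finset.range (K+1), (x + D - k * cl) ^ s := by
        refine Finset.sum_le_sum (fun k hk => ?_)
        have := (ih c' hc'0 (x - k * cl) (hkge k hk)).2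
        rw [hNc] at this
        calc ((s.factorial : ℝ) * ∏ j, c' j) * (((hfin (x - k * cl)).toFinset.card : ℕ) : ℝ)
            ≤ ((x - k * cl) + D) ^ s := this
          _ = (x + D - k * cl) ^ s := by ring_nf
      have h1 := sum_pow_upper (D := D) hx hcl0 hD0 s
      rw [← Finset.mul_sum] at h2
      rw [hNc1, hfact, hprod, hsum]
      calc (s+1) * (s.factorial : ℝ) * ((∏ j, c' j) * cl) *
              ∑ k ∈ Finset.range (K+1), (((hfin (x - k * cl)).toFinset.card : ℕ) : ℝ)
          = (s+1) * cl * (((s.factorial : ℝ) * ∏ j, c' j) *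
              ∑ k ∈ Finset.range (K+1), (((hfin (x - k * cl)).toFinset.card : ℕ) : ℝ)) := by
            ring
        _ ≤ (s+1) * cl * ∑ k ∈ Finset.range (K+1), (x + D - k * cl) ^ s := by
            apply mul_le_mul_of_nonneg_left h2 (by positivity)
        _ ≤ (x + D + cl) ^ (s+1) := h1
        _ = (x + (D + cl)) ^ (s+1) := by ring


lemma prodpow_le {s : ℕ} {q : Fin s → ℕ} (hq2 : ∀ j, 2 ≤ q j)
    (hcop : ∀ i j, i ≠ j → Nat.Coprime (q i) (q j)) {a b : Fin s → ℕ}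
    (h : ∏ j, q j ^ a j = ∏ j, q j ^ b j) (j : Fin s) : a j ≤ b j := by
  have hdvd : q j ^ a j ∣ ∏ i, q i ^ b i := by
    rw [← h]
    exact Finset.dvd_prod_of_mem _ (Finset.mem_univ j)
  rw [← Finset.mul_prod_erase Finset.univ _ (Finset.mem_univ j)] at hdvd
  have hcop2 : Nat.Coprime (q j ^ a j) (∏ i ∈ Finset.univ.erase j, q i ^ b i) := by
    apply Nat.Coprime.pow_left
    apply Nat.Coprime.prod_right
    intro i hi
    exact Nat.Coprime.pow_right _ (hcop j i (Finset.ne_of_mem_erase hi).symm)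
  have := (Nat.Coprime.dvd_of_dvd_mul_right hcop2 hdvd)
  exact (Nat.pow_dvd_pow_iff_le_right (by have := hq2 j; omega : 1 < q j)).mp this

lemma prodpow_inj {s : ℕ} {q : Fin s → ℕ} (hq2 : ∀ j, 2 ≤ q j)
    (hcop : ∀ i j, i ≠ j → Nat.Coprime (q i) (q j)) :
    Function.Injective (fun a : Fin s → ℕ => ∏ j, q j ^ a j) := by
  intro a b h
  funext j
  exact le_antisymm (prodpow_le hq2 hcop h j) (prodpow_le hq2 hcop h.symm j)

lemma image_eq {s : ℕ} {q : Fin s → ℕ} (hq2 : ∀ j, 2 ≤ q j) {n : ℕ} (hn : 2 ≤ n) :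
    {m : ℕ | m ∈ Set.Icc 1 n ∧ ∃ a : Fin s → ℕ, m = ∏ j, q j ^ a j} =
      (fun a : Fin s → ℕ => ∏ j, q j ^ a j) ''
        {a : Fin s → ℕ | ∑ j, (a j : ℝ) * Real.log (q j) ≤ Real.log n} := by
  have hq0 : ∀ j, 0 < q j := fun j => by have := hq2 j; omega
  have hlog : ∀ a : Fin s → ℕ, Real.log (∏ j, q j ^ a j : ℕ) =
      ∑ j, (a j : ℝ) * Real.log (q j) := by
    intro a
    push_cast
    rw [Real.log_prod (fun j _ => (pow_pos (by exact_mod_cast hq0 j : (0:ℝ) < (q j:ℝ)) _).ne')]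
    refine Finset.sum_congr rfl (fun j _ => ?_)
    rw [Real.log_pow]
  have hpos : ∀ a : Fin s → ℕ, 1 ≤ ∏ j, q j ^ a j :=
    fun a => Finset.one_le_prod' (fun j _ => Nat.one_le_pow _ _ (hq0 j))
  ext m
  simp only [Set.mem_setOf_eq, Set.mem_Icc, Set.mem_image]
  constructor
  · rintro ⟨⟨h1, h2⟩, a, rfl⟩
    refine ⟨a, ?_, rfl⟩
    rw [← hlog a]
    apply Real.log_le_log (by exact_mod_cast lt_of_lt_of_le one_pos h1)
    exact_mod_cast h2
  · rintro ⟨a, ha, rfl⟩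
    refine ⟨⟨hpos a, ?_⟩, a, rfl⟩
    rw [← hlog a] at ha
    have h0 : (0:ℝ) < (∏ j, q j ^ a j : ℕ) := by exact_mod_cast hpos a
    have := (Real.log_le_log_iff h0 (by positivity : (0:ℝ) < (n:ℝ))).mp ha
    exact_mod_cast this

open Finset in
/-- Marstrand's estimate: for pairwise coprime `q₁,…,q_s ≥ 2`,
`|S(q₁,…,q_s) ∩ [1,n]| = K_s (log n)^s + O((log n)^{s-1})` where
`K_s = (1/s!) ∏ 1/log q_j`. -/
theorem semigroup_counting_asymp (s : ℕ) (hs : 1 ≤ s) (q : Fin s → ℕ)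
    (hq2 : ∀ j, 2 ≤ q j)
    (hcop : ∀ i j, i ≠ j → Nat.Coprime (q i) (q j)) :
    ∃ C : ℝ, 0 < C ∧ ∀ n : ℕ, 2 ≤ n →
      |({m : ℕ | m ∈ Set.Icc 1 n ∧ ∃ a : Fin s → ℕ, m = ∏ j, q j ^ a j}.ncard : ℝ) -
          ((1 / (Nat.factorial s : ℝ)) * ∏ j, (1 / Real.log (q j))) * (Real.log n) ^ s|
        ≤ C * (Real.log n) ^ (s - 1) := by
  obtain ⟨t, rfl⟩ : ∃ t, s = t + 1 := ⟨s - 1, (Nat.succ_pred_eq_of_pos hs).symm⟩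
  set c : Fin (t+1) → ℝ := fun j => Real.log (q j) with hcdef
  have hq1 : ∀ j, (1:ℝ) < q j := fun j => by
    have := hq2 j; exact_mod_cast lt_of_lt_of_le one_lt_two (by exact_mod_cast this)
  have hc : ∀ j, 0 < c j := fun j => Real.log_pos (hq1 j)
  have hl2 : (0:ℝ) < Real.log 2 := Real.log_pos one_lt_two
  have hcl2 : ∀ j, Real.log 2 ≤ c j := fun j =>
    Real.log_le_log two_pos (by exact_mod_cast hq2 j)
  set P : ℝ := ((t+1).factorial : ℝ) * ∏ j, c j with hPdef
  have hP : 0 < P := mul_pos (by positivity) (Finset.prod_pos (fun j _ => hc j))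
  set Sg : ℝ := ∑ j, c j with hSdef
  have hSg : 0 < Sg := Finset.sum_pos (fun j _ => hc j) Finset.univ_nonempty
  set C : ℝ := P⁻¹ * (t+1) * Sg * (1 + Sg / Real.log 2) ^ t with hCdef
  have hC : 0 < C := by
    apply mul_pos (mul_pos (mul_pos (inv_pos.2 hP) (by positivity)) hSg)
    positivity
  refine ⟨C, hC, fun n hn => ?_⟩
  have hKP : (1 / ((t+1).factorial : ℝ)) * ∏ j, (1 / Real.log (q j)) = P⁻¹ := by
    simp only [one_div, hPdef, hcdef]
    rw [mul_inv, ← Finset.prod_inv_distrib]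
  set x : ℝ := Real.log n with hxdef
  have hx2 : Real.log 2 ≤ x := Real.log_le_log two_pos (by exact_mod_cast hn)
  have hx0 : 0 < x := lt_of_lt_of_le hl2 hx2
  -- rewrite cardinality
  rw [image_eq hq2 hn, Set.ncard_image_of_injOn ((prodpow_inj hq2 hcop).injOn)]
  obtain ⟨L, U⟩ := simplex_sandwich (t+1) c hc x hx0.le
  rw [← hPdef] at L U
  rw [← hSdef] at U
  set N : ℝ := ({a : Fin (t+1) → ℕ | ∑ j, (a j : ℝ) * c j ≤ x}.ncard : ℝ) with hNdef
  have hN0 : 0 ≤ N := Nat.cast_nonneg _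
  have hlow : P⁻¹ * x ^ (t+1) ≤ N := by
    rw [inv_mul_le_iff₀ hP]
    linarith [L]
  have hup : N ≤ P⁻¹ * (x + Sg) ^ (t+1) := by
    rw [le_inv_mul_iff₀ hP]
    linarith [U]
  have hdiff : (x + Sg) ^ (t+1) - x ^ (t+1) ≤ (t+1) * Sg * (x + Sg) ^ t := by
    have := pow_sub_pow_upper (a := x + Sg) (b := x) hx0.le (by linarith) t
    calc (x + Sg) ^ (t+1) - x ^ (t+1) ≤ (t+1) * ((x + Sg) - x) * (x + Sg) ^ t := this
      _ = (t+1) * Sg * (x + Sg) ^ t := by ring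
  have hxS : x + Sg ≤ (1 + Sg / Real.log 2) * x := by
    have h1 : Sg ≤ (Sg / Real.log 2) * x := by
      rw [div_mul_eq_mul_div, le_div_iff₀ hl2]
      nlinarith
    linarith
  have hpow : (x + Sg) ^ t ≤ (1 + Sg / Real.log 2) ^ t * x ^ t := by
    rw [← mul_pow]
    exact pow_le_pow_left₀ (by linarith) hxS t
  have habs : |N - ((1 / ((t+1).factorial : ℝ)) * ∏ j, (1 / Real.log (q j))) * x ^ (t+1)|
      ≤ C * x ^ t := by
    rw [hKP, abs_of_nonneg (by linarith)]
    have step : N - P⁻¹ * x ^ (t+1) ≤ P⁻¹ * ((t+1) * Sg * (x + Sg) ^ t) := by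
      have : N - P⁻¹ * x ^ (t+1) ≤ P⁻¹ * ((x + Sg) ^ (t+1) - x ^ (t+1)) := by
        rw [mul_sub]; linarith
      refine this.trans ?_
      exact mul_le_mul_of_nonneg_left hdiff (inv_pos.2 hP).le
    refine step.trans ?_
    calc P⁻¹ * ((t+1) * Sg * (x + Sg) ^ t)
        ≤ P⁻¹ * ((t+1) * Sg * ((1 + Sg / Real.log 2) ^ t * x ^ t)) := by
          apply mul_le_mul_of_nonneg_left _ (inv_pos.2 hP).le
          apply mul_le_mul_of_nonneg_left hpow
          positivity
      _ = C * x ^ t := by rw [hCdef]; ring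
  simpa using habs
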